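/- Let P be a probability distribution on a finite set X, r : X → ℝ a reward function, and λ > 0. Define the tilted distribution P*_λ(x) = P(x)·exp(r(x)/λ) / E_P[exp(r(X)/λ)]. Then for any distribution Q on X with D_KL(Q‖P) ≤ D_KL(P*_λ‖P), we have E_Q[r] ≤ E_{P*_λ}[r]. In other words, P*_λ maximizes expected reward among all distributions with KL-divergence to P at most D_KL(P*_λ‖P). -/
import Mathlib


open Finset Real

/-- Expectation of `f` under weight function `P` on a finite alphabet. -/
noncomputable def expect {X : Type*} [Fintype X] (P f : X → ℝ) : ℝ := ∑ x, P x * f x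

/-- Kullback–Leibler divergence `D_KL(Q‖P)` on a finite alphabet. -/
noncomputable def klDiv {X : Type*} [Fintype X] (Q P : X → ℝ) : ℝ :=
  ∑ x, Q x * Real.log (Q x / P x)

/-- The exponentially tilted distribution `P*_λ`. -/
noncomputable def tilt {X : Type*} [Fintype X] (P r : X → ℝ) (lam : ℝ) (x : X) : ℝ :=
  P x * Real.exp (r x / lam) / ∑ y, P y * Real.exp (r y / lam)

/-- Variance of `f` under `P`. -/
noncomputable def varP {X : Type*} [Fintype X] (P f : X → ℝ) : ℝ :=
  expect P (fun x => f x ^ 2) - (expect P f) ^ 2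

/-- Squared coefficient of variation of `f` under `P`. -/
noncomputable def cvSq {X : Type*} [Fintype X] (P f : X → ℝ) : ℝ :=
  varP P f / (expect P f) ^ 2

/-- The Soft Best-of-`n` sampling distribution: draw `n` i.i.d. samples from `P`
and select one with probability proportional to `exp(r(X_i)/λ)`. -/
noncomputable def softBoN {X : Type*} [Fintype X] [DecidableEq X]
    (P r : X → ℝ) (lam : ℝ) (n : ℕ) (x : X) : ℝ :=
  ∑ s : Fin n → X, (∏ j, P (s j)) *
    ((∑ i : Fin n, if s i = x then Real.exp (r (s i) / lam) else 0) /
      ∑ j, Real.exp (r (s j) / lam))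

/-- the tilted distribution `P*_λ` maximizes expected reward among all
distributions whose KL divergence to `P` is at most `D_KL(P*_λ‖P)`. -/
theorem tilt_maximizes_reward {X : Type*} [Fintype X]
    (P r : X → ℝ) (lam : ℝ) (hlam : 0 < lam)
    (hPpos : ∀ x, 0 < P x) (hPsum : ∑ x, P x = 1)
    (Q : X → ℝ) (hQ : ∀ x, 0 ≤ Q x) (hQsum : ∑ x, Q x = 1)
    (hKL : klDiv Q P ≤ klDiv (tilt P r lam) P) :
    expect Q r ≤ expect (tilt P r lam) r := by
  classical
  have hne : (Finset.univ : Finset X).Nonempty := by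
    rcases (Finset.univ (α := X)).eq_empty_or_nonempty with h | h
    · rw [h, Finset.sum_empty] at hPsum; norm_num at hPsum
    · exact h
  set Z := ∑ y, P y * Real.exp (r y / lam) with hZdef
  have hZpos : 0 < Z :=
    Finset.sum_pos (fun y _ => mul_pos (hPpos y) (Real.exp_pos _)) hne
  have htpos : ∀ x, 0 < tilt P r lam x := fun x =>
    div_pos (mul_pos (hPpos x) (Real.exp_pos _)) hZpos
  have htsum : ∑ x, tilt P r lam x = 1 := by
    simp only [tilt]
    rw [← Finset.sum_div, ← hZdef, div_self hZpos.ne']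
  have hlog : ∀ x, Real.log (tilt P r lam x / P x) = r x / lam - Real.log Z := by
    intro x
    have hx : tilt P r lam x / P x = Real.exp (r x / lam) / Z := by
      rw [tilt, ← hZdef, div_right_comm, mul_comm, mul_div_assoc,
        div_self (hPpos x).ne', mul_one]
    rw [hx, Real.log_div (Real.exp_pos _).ne' hZpos.ne', Real.log_exp]
  have key : ∀ (W : X → ℝ), (∀ x, 0 ≤ W x) → ∑ x, W x = 1 →
      klDiv W P = (∑ x, W x * Real.log (W x / tilt P r lam x))
        + (1 / lam) * expect W r - Real.log Z := by
    intro W hW hWs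
    have hpt : ∀ x, W x * Real.log (W x / P x)
        = W x * Real.log (W x / tilt P r lam x) + W x * (r x / lam - Real.log Z) := by
      intro x
      rcases eq_or_lt_of_le (hW x) with h | h
      · simp [← h]
      · have h1 : Real.log (W x / P x)
            = Real.log (W x / tilt P r lam x) + Real.log (tilt P r lam x / P x) := by
          have ht := (htpos x).ne'
          have hp := (hPpos x).ne'
          have hw := h.ne'
          rw [← Real.log_mul (div_pos h (htpos x)).ne' (div_pos (htpos x) (hPpos x)).ne']
          congr 1
          field_simp
        rw [h1, hlog x]; ring
    have e1 : ∑ x, W x * (r x / lam) = (1 / lam) * expect W r := by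
      simp only [_root_.expect, Finset.mul_sum]
      exact Finset.sum_congr rfl (fun x _ => by ring)
    simp only [klDiv]
    calc (∑ x, W x * Real.log (W x / P x))
        = ∑ x, (W x * Real.log (W x / tilt P r lam x) + W x * (r x / lam - Real.log Z)) :=
          Finset.sum_congr rfl (fun x _ => hpt x)
      _ = (∑ x, W x * Real.log (W x / tilt P r lam x))
          + ((∑ x, W x * (r x / lam)) - (∑ x, W x * Real.log Z)) := by
          rw [Finset.sum_add_distrib]
          congr 1
          simp only [mul_sub]
          rw [Finset.sum_sub_distrib]
      _ = (∑ x, W x * Real.log (W x / tilt P r lam x))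
          + (1 / lam) * expect W r - Real.log Z := by
          rw [e1, ← Finset.sum_mul, hWs, one_mul]; ring
  have hGt : ∑ x, tilt P r lam x * Real.log (tilt P r lam x / tilt P r lam x) = 0 := by
    apply Finset.sum_eq_zero
    intro x _
    rw [div_self (htpos x).ne', Real.log_one, mul_zero]
  have hGQ : 0 ≤ ∑ x, Q x * Real.log (Q x / tilt P r lam x) := by
    have h1 : ∀ x, Q x * Real.log (tilt P r lam x / Q x) ≤ tilt P r lam x - Q x := by
      intro x
      rcases eq_or_lt_of_le (hQ x) with h | h
      · simp [← h]
        exact (htpos x).le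
      · have hl := Real.log_le_sub_one_of_pos (div_pos (htpos x) h)
        calc Q x * Real.log (tilt P r lam x / Q x)
            ≤ Q x * (tilt P r lam x / Q x - 1) :=
              mul_le_mul_of_nonneg_left hl (hQ x)
          _ = tilt P r lam x - Q x := by field_simp
    have h2 : ∑ x, Q x * Real.log (tilt P r lam x / Q x) ≤ 0 := by
      calc ∑ x, Q x * Real.log (tilt P r lam x / Q x)
          ≤ ∑ x, (tilt P r lam x - Q x) := Finset.sum_le_sum (fun x _ => h1 x)
        _ = 0 := by rw [Finset.sum_sub_distrib, htsum, hQsum]; ring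
    have h3 : ∑ x, Q x * Real.log (Q x / tilt P r lam x)
        = - ∑ x, Q x * Real.log (tilt P r lam x / Q x) := by
      rw [← Finset.sum_neg_distrib]
      apply Finset.sum_congr rfl
      intro x _
      rcases eq_or_lt_of_le (hQ x) with h | h
      · simp [← h]
      · rw [Real.log_div h.ne' (htpos x).ne', Real.log_div (htpos x).ne' h.ne']; ring
    rw [h3]
    linarith
  have kQ := key Q hQ hQsum
  have kT := key (tilt P r lam) (fun x => (htpos x).le) htsum
  rw [hGt, zero_add] at kT
  have hmain : (1 / lam) * expect Q r ≤ (1 / lam) * expect (tilt P r lam) r := by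
    linarith
  have hpos : (0 : ℝ) < 1 / lam := by positivity
  exact le_of_mul_le_mul_left (by linarith) hpos
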